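/- For an ordered alphabet Σ = {a₁ < a₂ < ⋯ < a_k} and a word w over Σ, the Parikh matrix Ψ_Σ(w) = (m_{i,j}) is upper triangular with unit diagonal, and for all 1 ≤ i ≤ j ≤ k, the entry m_{i,j+1} equals the number of occurrences of the word a_i a_{i+1} ⋯ a_j as a scattered subword of w. -/

import Mathlib

/-- The number of occurrences of `v` as a scattered subword (subsequence) of `w`. -/
def lcountF {k : ℕ} (v w : List (Fin k)) : ℕ := w.sublists.count v

/-- The Parikh matrix mapping for the ordered alphabet `a₁ < ⋯ < a_k` (letters `Fin k`):
the monoid morphism sending the letter `q` to the identity matrix plus a single `1`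
in entry `(q, q+1)`. -/
def parikhMat (k : ℕ) (w : List (Fin k)) : Matrix (Fin (k+1)) (Fin (k+1)) ℕ :=
  (w.map (fun q => (1 : Matrix (Fin (k+1)) (Fin (k+1)) ℕ) +
    Matrix.single q.castSucc q.succ 1)).prod

/-- The word `a_i a_{i+1} ⋯ a_j`. -/
def intervalWord (k : ℕ) (i j : Fin k) : List (Fin k) :=
  (List.finRange k).filter (fun x => i ≤ x ∧ x ≤ j)

namespace ParikhAux

lemma lcount_eq_sublists' {k : ℕ} (v w : List (Fin k)) :
    lcountF v w = w.sublists'.count v := by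
  unfold lcountF
  exact (w.sublists_perm_sublists').count_eq v

lemma lcount_nil_left {k : ℕ} (w : List (Fin k)) : lcountF [] w = 1 := by
  rw [lcount_eq_sublists']
  induction w with
  | nil => simp
  | cons a w ih =>
    rw [List.sublists'_cons, List.count_append, ih]
    have h : ([] : List (Fin k)) ∉ (w.sublists').map (List.cons a) := by simp
    rw [List.count_eq_zero.mpr h]

lemma lcount_nil_right {k : ℕ} (v : List (Fin k)) :
    lcountF v [] = if v = [] then 1 else 0 := by
  rcases eq_or_ne v [] with rfl | h
  · simp [lcountF]
  · simp [lcountF, List.count_eq_zero, h, Ne.symm h]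

lemma lcount_cons_cons {k : ℕ} (b : Fin k) (t : List (Fin k)) (a : Fin k) (w : List (Fin k)) :
    lcountF (b :: t) (a :: w) = lcountF (b :: t) w + if b = a then lcountF t w else 0 := by
  rw [lcount_eq_sublists', lcount_eq_sublists', List.sublists'_cons, List.count_append]
  congr 1
  rcases eq_or_ne b a with rfl | h
  · rw [if_pos rfl, lcount_eq_sublists']
    exact List.count_map_of_injective w.sublists' (List.cons b)
      (fun x y hxy => by injection hxy) t
  · rw [if_neg h, List.count_eq_zero]
    simp only [List.mem_map, not_exists, not_and]
    rintro s - hs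
    injection hs with h1
    exact h h1.symm

/-- The word `a_i ⋯ a_{j-1}` with `Fin (k+1)` endpoints. -/
def wordF (k : ℕ) (i j : Fin (k+1)) : List (Fin k) :=
  (List.finRange k).filter (fun x => i ≤ x.castSucc ∧ x.succ ≤ j)

lemma word_nil (k : ℕ) (i j : Fin (k+1)) (h : j ≤ i) : wordF k i j = [] := by
  rw [wordF, List.filter_eq_nil_iff]
  intro x _
  simp only [decide_eq_true_eq, not_and, Fin.le_def, Fin.coe_castSucc, Fin.val_succ,
    not_le]
  intro h1
  have := h
  rw [Fin.le_def] at this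
  omega

lemma word_sorted (k : ℕ) (i j : Fin (k+1)) : (wordF k i j).Pairwise (· < ·) :=
  (List.pairwise_lt_finRange k).filter _

lemma mem_word (k : ℕ) (i j : Fin (k+1)) (x : Fin k) :
    x ∈ wordF k i j ↔ (i ≤ x.castSucc ∧ x.succ ≤ j) := by
  simp [wordF, List.mem_filter]

lemma word_cons (k : ℕ) (i j : Fin (k+1)) (h : i < j) (hk : i.val < k) :
    wordF k i j = (⟨i.val, hk⟩ : Fin k) :: wordF k (⟨i.val, hk⟩ : Fin k).succ j := by
  have hv : i.val < j.val := h
  set b : Fin k := ⟨i.val, hk⟩ with hb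
  have sorted1 : (wordF k i j).Pairwise (· < ·) := word_sorted k i j
  have sorted2 : (b :: wordF k b.succ j).Pairwise (· < ·) := by
    refine List.Pairwise.cons ?_ (word_sorted k b.succ j)
    intro x hx
    rw [mem_word] at hx
    have h1 := hx.1
    rw [Fin.le_def] at h1
    simp only [Fin.val_succ, Fin.coe_castSucc] at h1
    rw [Fin.lt_def]
    simp only [hb]
    have e1 : ((b.succ : Fin (k+1)) : ℕ) = i.val + 1 := rfl
    have e2 : ((x.castSucc : Fin (k+1)) : ℕ) = x.val := rfl
    have e3 : ((⟨i.val, hk⟩ : Fin k) : ℕ) = i.val := rfl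
    omega
  refine List.Perm.eq_of_pairwise' sorted1 sorted2 ?_
  refine List.perm_of_nodup_nodup_toFinset_eq
    (sorted1.imp ne_of_lt) (sorted2.imp ne_of_lt) ?_
  ext x
  simp only [List.mem_toFinset, mem_word, List.mem_cons]
  rw [Fin.le_def, Fin.le_def, Fin.le_def, Fin.ext_iff]
  simp only [Fin.coe_castSucc, Fin.val_succ, hb]
  omega

lemma key (k : ℕ) (w : List (Fin k)) (i j : Fin (k+1)) :
    parikhMat k w i j = if i ≤ j then lcountF (wordF k i j) w else 0 := by
  induction w generalizing i j with
  | nil =>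
    have hid : parikhMat k [] i j = if i = j then 1 else 0 := by
      simp only [parikhMat, List.map_nil, List.prod_nil]
      rw [Matrix.one_apply]
    rw [hid]
    rcases lt_trichotomy i j with h | rfl | h
    · have hk : i.val < k := by
        have h1 : i.val < j.val := h
        have h2 := j.isLt
        omega
      rw [if_neg (ne_of_lt h), if_pos h.le, word_cons k i j h hk, lcount_nil_right,
        if_neg (by simp)]
    · rw [if_pos rfl, if_pos le_rfl, word_nil k i i le_rfl, lcount_nil_right, if_pos rfl]
    · rw [if_neg (ne_of_gt h), if_neg (not_le.mpr h)]
  | cons a w ih =>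
    have hM : parikhMat k (a :: w) i j = parikhMat k w i j +
        (if i = a.castSucc then parikhMat k w a.succ j else 0) := by
      simp only [parikhMat, List.map_cons, List.prod_cons]
      rw [Matrix.add_mul, Matrix.one_mul, Matrix.add_apply]
      congr 1
      rcases eq_or_ne i a.castSucc with rfl | h
      · rw [if_pos rfl]
        rw [Matrix.single_mul_apply_same, one_mul]
      · rw [if_neg h, Matrix.single_mul_apply_of_ne _ _ _ _ _ h]
    rw [hM]
    rcases lt_trichotomy i j with hij | rfl | hij
    · have hk : i.val < k := by
        have h1 : i.val < j.val := hij
        have h2 := j.isLt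
        omega
      set b : Fin k := ⟨i.val, hk⟩ with hb
      have hbsucc : b.succ ≤ j := by
        rw [Fin.le_def]
        have h1 : i.val < j.val := hij
        simp only [Fin.val_succ, hb]
        omega
      rw [if_pos hij.le, word_cons k i j hij hk, lcount_cons_cons,
        ih i j, if_pos hij.le, word_cons k i j hij hk]
      congr 1
      rcases eq_or_ne i a.castSucc with h | h
      · have hba : b = a := by
          rw [Fin.ext_iff, hb]
          simpa [Fin.ext_iff] using h
        rw [if_pos h, if_pos hba, ← hb, ← hba, ih b.succ j, if_pos hbsucc]
      · have hba : b ≠ a := by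
          intro e
          apply h
          rw [← e]
          rw [Fin.ext_iff]
          simp [hb]
        rw [if_neg h, if_neg hba]
    · rw [if_pos le_rfl, word_nil k i i le_rfl, lcount_nil_left,
        ih i i, if_pos le_rfl, word_nil k i i le_rfl, lcount_nil_left]
      have hz : (if i = a.castSucc then parikhMat k w a.succ i else 0) = 0 := by
        split
        · next h =>
          rw [ih, if_neg]
          rw [not_le, h, Fin.lt_def]
          simp
        · rfl
      rw [hz]
    · rw [if_neg (not_le.mpr hij), ih i j, if_neg (not_le.mpr hij)]
      have hz : (if i = a.castSucc then parikhMat k w a.succ j else 0) = 0 := by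
        split
        · next h =>
          rw [ih, if_neg]
          rw [not_le]
          refine lt_trans hij ?_
          rw [h, Fin.lt_def]
          simp
        · rfl
      rw [hz]

lemma interval_eq_word (k : ℕ) (i j : Fin k) :
    intervalWord k i j = wordF k i.castSucc j.succ := by
  rw [intervalWord, wordF]
  apply List.filter_congr
  intro x _
  simp only [decide_eq_decide]
  rw [Fin.le_def, Fin.le_def, Fin.le_def, Fin.le_def]
  simp only [Fin.coe_castSucc, Fin.val_succ]
  omega

end ParikhAux

theorem parikh_matrix_properties (k : ℕ) (w : List (Fin k)) :
    (∀ i j : Fin (k+1), j < i → parikhMat k w i j = 0) ∧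
    (∀ i : Fin (k+1), parikhMat k w i i = 1) ∧
    (∀ i j : Fin k, i ≤ j →
      parikhMat k w i.castSucc j.succ = lcountF (intervalWord k i j) w) := by
  refine ⟨fun i j h => ?_, fun i => ?_, fun i j hij => ?_⟩
  · rw [ParikhAux.key, if_neg (not_le.mpr h)]
  · rw [ParikhAux.key, if_pos le_rfl, ParikhAux.word_nil k i i le_rfl,
      ParikhAux.lcount_nil_left]
  · have h1 : i.castSucc ≤ j.succ := by
      rw [Fin.le_def]
      simp only [Fin.coe_castSucc, Fin.val_succ]
      have := hij
      rw [Fin.le_def] at this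
      omega
    rw [ParikhAux.key, if_pos h1, ParikhAux.interval_eq_word]
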